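/- Let G be a finitely generated group that is not virtually nilpotent. Then G has a quotient G/N that is just non-virtually-nilpotent (JNVN): G/N is not virtually nilpotent, but every proper quotient of G/N is virtually nilpotent. -/

import Mathlib

open Subgroup
open scoped commutatorElement

/-- A group is virtually nilpotent if it has a nilpotent subgroup of finite index. -/
def IsVirtuallyNilpotent (G : Type*) [Group G] : Prop :=
  ∃ H : Subgroup G, H.FiniteIndex ∧ Group.IsNilpotent H

/-- Virtual nilpotency transfers along isomorphisms. -/
lemma IsVirtuallyNilpotent.of_mulEquiv {A B : Type*} [Group A] [Group B] (e : A ≃* B)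
    (h : IsVirtuallyNilpotent A) : IsVirtuallyNilpotent B := by
  obtain ⟨H, hfi, hnil⟩ := h
  refine ⟨H.map e.toMonoidHom, ⟨?_⟩, ?_⟩
  · rw [Subgroup.index_map_eq _ e.surjective
      (by rw [(MonoidHom.ker_eq_bot_iff e.toMonoidHom).mpr e.injective]; exact bot_le)]
    exact hfi.index_ne_zero
  · haveI := hnil
    exact nilpotent_of_mulEquiv (e.subgroupMap H)

/-- Equality version of `lowerCentralSeries.map` for surjective homomorphisms. -/
lemma lowerCentralSeries_map_eq {A B : Type*} [Group A] [Group B] (f : A →* B)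
    (hf : Function.Surjective f) (n : ℕ) :
    (Subgroup.lowerCentralSeries (⊤ : Subgroup A) n).map f = Subgroup.lowerCentralSeries (⊤ : Subgroup B) n := by
  induction n with
  | zero =>
    simp only [Subgroup.lowerCentralSeries_zero]
    rw [← MonoidHom.range_eq_map, f.range_eq_top_of_surjective hf]
  | succ n ih =>
    show Subgroup.map f ⁅Subgroup.lowerCentralSeries (⊤ : Subgroup A) n, (⊤ : Subgroup A)⁆ =
      ⁅Subgroup.lowerCentralSeries (⊤ : Subgroup B) n, (⊤ : Subgroup B)⁆
    rw [Subgroup.map_commutator, ih, ← MonoidHom.range_eq_map,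
      f.range_eq_top_of_surjective hf]

/-- `⁅normalClosure T, ⊤⁆` is the normal closure of the commutators of elements of `T`
with generators. -/
lemma commutator_normalClosure_top {M : Type*} [Group M] (T S : Set M)
    (hS : Subgroup.closure S = ⊤) :
    ⁅Subgroup.normalClosure T, (⊤ : Subgroup M)⁆ =
      Subgroup.normalClosure ((fun p : M × M => ⁅p.1, p.2⁆) '' (T ×ˢ S)) := by
  set R := Subgroup.normalClosure ((fun p : M × M => ⁅p.1, p.2⁆) '' (T ×ˢ S)) with hR
  apply le_antisymm
  · -- work in the quotient by `R`
    let π := QuotientGroup.mk' R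
    have hπ : Function.Surjective π := QuotientGroup.mk_surjective
    have hcen : ∀ t ∈ T, π t ∈ Subgroup.center (M ⧸ R) := by
      intro t ht
      have hcomm : ∀ s ∈ S, π s ∈ Subgroup.centralizer {π t} := by
        intro s hs
        rw [Subgroup.mem_centralizer_iff]
        rintro x rfl
        have : π ⁅t, s⁆ = 1 := by
          rw [← MonoidHom.mem_ker, QuotientGroup.ker_mk']
          exact Subgroup.subset_normalClosure ⟨(t, s), ⟨ht, hs⟩, rfl⟩
        rw [map_commutatorElement] at this
        exact commutatorElement_eq_one_iff_commute.mp this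
      have htop : Subgroup.closure (π '' S) = ⊤ := by
        rw [← MonoidHom.map_closure, hS, ← MonoidHom.range_eq_map,
          π.range_eq_top_of_surjective hπ]
      have hle : Subgroup.closure (π '' S) ≤ Subgroup.centralizer {π t} := by
        rw [Subgroup.closure_le]
        rintro _ ⟨s, hs, rfl⟩
        exact hcomm s hs
      rw [htop] at hle
      rw [Subgroup.mem_center_iff]
      intro g
      have := hle (Subgroup.mem_top g)
      rw [Subgroup.mem_centralizer_iff] at this
      exact (this (π t) rfl).symm
    have hmapT : Subgroup.map π (Subgroup.normalClosure T) ≤ Subgroup.center (M ⧸ R) := by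
      rw [Subgroup.map_normalClosure _ _ hπ]
      apply Subgroup.normalClosure_le_normal
      rintro _ ⟨t, ht, rfl⟩
      exact hcen t ht
    have hbot : Subgroup.map π ⁅Subgroup.normalClosure T, (⊤ : Subgroup M)⁆ = ⊥ := by
      rw [Subgroup.map_commutator]
      rw [eq_bot_iff, Subgroup.commutator_le]
      intro g₁ hg₁ g₂ _
      have hg₁c := hmapT hg₁
      rw [Subgroup.mem_bot, commutatorElement_eq_one_iff_commute]
      exact (Subgroup.mem_center_iff.mp hg₁c g₂).symm
    rw [Subgroup.map_eq_bot_iff, QuotientGroup.ker_mk'] at hbot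
    exact hbot
  · apply Subgroup.normalClosure_le_normal
    rintro _ ⟨⟨t, s⟩, ⟨ht, _⟩, rfl⟩
    exact Subgroup.commutator_mem_commutator (Subgroup.subset_normalClosure ht)
      (Subgroup.mem_top s)

/-- In a finitely generated group, every term of the lower central series is the normal
closure of a finite set. -/
lemma lowerCentralSeries_eq_normalClosure_finite {M : Type*} [Group M] (hfg : Group.FG M)
    (n : ℕ) : ∃ T : Set M, T.Finite ∧ Subgroup.lowerCentralSeries (⊤ : Subgroup M) n = Subgroup.normalClosure T := by
  obtain ⟨S, hScl, hSfin⟩ := Group.fg_iff.mp hfg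
  induction n with
  | zero =>
    refine ⟨S, hSfin, ?_⟩
    rw [Subgroup.lowerCentralSeries_zero]
    exact le_antisymm (by rw [← hScl]; exact Subgroup.closure_le_normalClosure) le_top
  | succ n ih =>
    obtain ⟨T, hTfin, hT⟩ := ih
    refine ⟨(fun p : M × M => ⁅p.1, p.2⁆) '' (T ×ˢ S), (hTfin.prod hSfin).image _, ?_⟩
    show ⁅Subgroup.lowerCentralSeries (⊤ : Subgroup M) n, (⊤ : Subgroup M)⁆ = _
    rw [hT]
    exact commutator_normalClosure_top T S hScl

/-- A finite set contained in a directed union of subgroups lies in one of them. -/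
lemma finite_subset_directed {G : Type*} [Group G] {ι : Type*} [Nonempty ι]
    {K : ι → Subgroup G} (hdir : Directed (· ≤ ·) K) {F : Set G} (hF : F.Finite)
    (h : ∀ x ∈ F, ∃ i, x ∈ K i) : ∃ i, F ⊆ ((K i : Subgroup G) : Set G) := by
  classical
  have hchoice : ∀ x : F, ∃ i, (x : G) ∈ K i := fun x => h x x.2
  choose idx hidx using hchoice
  haveI : Fintype F := hF.fintype
  obtain ⟨i, hi⟩ := hdir.finset_le (Finset.univ.image idx)
  refine ⟨i, fun x hx => ?_⟩
  exact hi _ (Finset.mem_image_of_mem idx (Finset.mem_univ ⟨x, hx⟩)) (hidx ⟨x, hx⟩)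

/-- Key lemma: if `G` is f.g. and `G/N` is virtually nilpotent, then there is a finite
subset `F` of `N` such that any quotient of `G` killing `F` is virtually nilpotent. -/
lemma key_lemma {G : Type*} [Group G] (hfg : Group.FG G) (N : Subgroup G) (hN : N.Normal)
    (hvn : IsVirtuallyNilpotent (G ⧸ N)) :
    ∃ F : Set G, F.Finite ∧ F ⊆ (N : Set G) ∧
      ∀ (P : Subgroup G) (_ : P.Normal), F ⊆ (P : Set G) → IsVirtuallyNilpotent (G ⧸ P) := by
  haveI := hN
  obtain ⟨H, hHfi, hHnil⟩ := hvn
  haveI := hHfi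
  haveI := hHnil
  set K := H.normalCore with hK
  haveI : K.Normal := H.normalCore_normal
  haveI : K.FiniteIndex := Subgroup.finiteIndex_normalCore H
  haveI hKnil : Group.IsNilpotent K :=
    nilpotent_of_mulEquiv (Subgroup.subgroupOfEquivOfLe (H.normalCore_le))
  obtain ⟨c, hc⟩ := Subgroup.nilpotent_iff_lowerCentralSeries.mp hKnil
  set M := K.comap (QuotientGroup.mk' N) with hM
  haveI : M.FiniteIndex := by
    constructor
    rw [Subgroup.index_comap_of_surjective _ QuotientGroup.mk_surjective]
    exact Subgroup.FiniteIndex.index_ne_zero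
  haveI := hfg
  haveI hMfg : Group.FG M := inferInstance
  obtain ⟨T, hTfin, hT⟩ := lowerCentralSeries_eq_normalClosure_finite hMfg c
  -- the map `M → K` induced by the quotient map
  let g0 : M →* K := MonoidHom.codRestrict ((QuotientGroup.mk' N).comp M.subtype) K
    (fun x => x.2)
  have hTN : ∀ t ∈ T, (t : G) ∈ N := by
    intro t ht
    have ht' : t ∈ Subgroup.lowerCentralSeries (⊤ : Subgroup M) c := hT ▸ Subgroup.subset_normalClosure ht
    have : g0 t ∈ Subgroup.lowerCentralSeries (⊤ : Subgroup K) c :=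
      Subgroup.lowerCentralSeries.map g0 c (Subgroup.mem_map_of_mem g0 ht')
    rw [hc, Subgroup.mem_bot] at this
    have : QuotientGroup.mk' N (t : G) = 1 := congrArg Subtype.val this
    rwa [← MonoidHom.mem_ker, QuotientGroup.ker_mk'] at this
  refine ⟨Subtype.val '' T, hTfin.image _, by rintro _ ⟨t, ht, rfl⟩; exact hTN t ht, ?_⟩
  intro P hP hFP
  haveI := hP
  set Q := M.map (QuotientGroup.mk' P) with hQ
  refine ⟨Q, ⟨?_⟩, ?_⟩
  · intro h0
    have hdvd : Q.index ∣ M.index :=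
      Subgroup.index_map_dvd (H := M) (f := QuotientGroup.mk' P) QuotientGroup.mk_surjective
    rw [h0] at hdvd
    exact Subgroup.FiniteIndex.index_ne_zero (H := M) (zero_dvd_iff.mp hdvd)
  · -- nilpotency of Q
    let g : M →* Q := (QuotientGroup.mk' P).subgroupMap M
    have hg : Function.Surjective g := (QuotientGroup.mk' P).subgroupMap_surjective M
    rw [Subgroup.nilpotent_iff_lowerCentralSeries]
    refine ⟨c, ?_⟩
    rw [← lowerCentralSeries_map_eq g hg c, hT]
    rw [Subgroup.map_normalClosure _ _ hg]
    rw [eq_bot_iff]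
    apply Subgroup.normalClosure_le_normal
    rintro _ ⟨t, ht, rfl⟩
    have : (t : G) ∈ P := hFP ⟨t, ht, rfl⟩
    have : QuotientGroup.mk' P (t : G) = 1 := by
      rwa [← QuotientGroup.ker_mk' P, MonoidHom.mem_ker] at this
    rw [SetLike.mem_coe, Subgroup.mem_bot]
    exact Subtype.ext this

/-- A finitely generated group which is not virtually nilpotent has a just
non-virtually-nilpotent (JNVN) quotient: a quotient `G/N` which is not virtually
nilpotent, but all of whose proper quotients are virtually nilpotent. -/
theorem stmt10 {G : Type*} [Group G] (hfg : Group.FG G)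
    (hG : ¬ IsVirtuallyNilpotent G) :
    ∃ (N : Subgroup G) (hN : N.Normal),
      ¬ @IsVirtuallyNilpotent (G ⧸ N) (@QuotientGroup.Quotient.group _ _ N hN) ∧
      ∀ (M : Subgroup G) (hM : M.Normal), N ≤ M → N ≠ M →
        @IsVirtuallyNilpotent (G ⧸ M) (@QuotientGroup.Quotient.group _ _ M hM) := by
  classical
  set Pred : Subgroup G → Prop := fun N =>
    ∃ h : N.Normal, ¬ @IsVirtuallyNilpotent (G ⧸ N) (@QuotientGroup.Quotient.group _ _ N h)
    with hPred
  have hbot : Pred ⊥ := by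
    refine ⟨inferInstance, fun h => hG ?_⟩
    exact IsVirtuallyNilpotent.of_mulEquiv (QuotientGroup.quotientBot (G := G)) h
  have hchain : ∀ c ⊆ setOf Pred, IsChain (· ≤ ·) c → ∀ y ∈ c,
      ∃ ub ∈ setOf Pred, ∀ z ∈ c, z ≤ ub := by
    intro c hcP hcChain y hy
    haveI : Nonempty c := ⟨⟨y, hy⟩⟩
    have hdir : Directed (· ≤ ·) (fun i : c => (i : Subgroup G)) :=
      hcChain.directed
    set N : Subgroup G := ⨆ i : c, (i : Subgroup G) with hNdef
    have hmem : ∀ x : G, x ∈ N ↔ ∃ i : c, x ∈ (i : Subgroup G) := fun x =>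
      Subgroup.mem_iSup_of_directed hdir
    haveI hNnorm : N.Normal := by
      constructor
      intro x hx gg
      obtain ⟨i, hi⟩ := (hmem x).mp hx
      haveI : (i : Subgroup G).Normal := (hcP i.2).choose
      exact (hmem _).mpr ⟨i, this.conj_mem x hi gg⟩
    refine ⟨N, ⟨hNnorm, ?_⟩, fun z hz => le_iSup (fun i : c => (i : Subgroup G)) ⟨z, hz⟩⟩
    intro hvn
    obtain ⟨F, hFfin, hFN, hQuot⟩ := key_lemma hfg N hNnorm hvn
    -- find a single member of the chain containing F
    have : ∃ i : c, F ⊆ ((i : Subgroup G) : Set G) :=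
      finite_subset_directed hdir hFfin (fun x hx => (hmem x).mp (hFN hx))
    obtain ⟨i, hi⟩ := this
    obtain ⟨hinorm, hinvn⟩ := hcP i.2
    exact hinvn (hQuot (i : Subgroup G) hinorm hi)
  obtain ⟨N, _, hNmax⟩ := zorn_le_nonempty₀ (setOf Pred) hchain ⊥ hbot
  obtain ⟨hNnorm, hNnvn⟩ := hNmax.1
  refine ⟨N, hNnorm, hNnvn, ?_⟩
  intro M hM hle hne
  by_contra hnvn
  have hMP : Pred M := ⟨hM, hnvn⟩
  have := hNmax.2 hMP hle
  exact hne (le_antisymm hle this)
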